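/- Let M_E be a von Neumann algebra, X and K finite sets with |K| ≤ |X|, and f : X → K a function. If ω_XE = ⊕_{x∈X} ω_E^x ∈ ℓ¹(X) ⊗ S(M_E) is a cq-state such that the hashed state satisfies ω_{f(X)E} = (1/|K|) e_K ⊗ σ_E for some state σ_E ∈ S(M_E), then log|K| ≤ H_min(X|E)_ω. -/

import Mathlib

/-!
Common framework: quantum information theory on von Neumann algebras.

A von Neumann algebra is modelled as a subset `S` of the bounded operators on a complex
Hilbert space satisfying the double-commutant condition (`IsVNA`).  Positive normal
(σ-weakly continuous) functionals are modelled via the standard characterization: a positive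
functional on a von Neumann algebra is normal iff it is implemented by an `ℓ²`-family of
vectors, `ω(a) = ∑' n, ⟪ξ n, a (ξ n)⟫`.
-/

set_option maxHeartbeats 1000000
set_option synthInstance.maxHeartbeats 400000

noncomputable section

open scoped ComplexInnerProductSpace ComplexOrder ENNReal

universe u w

namespace VNPaper

/-- The uniformity on `PiLp` is the product uniformity, hence completeness transfers. -/
instance piLpCompleteSpace {ι : Type} {p : ℝ≥0∞} {β : ι → Type w} [∀ i, UniformSpace (β i)]
    [∀ i, CompleteSpace (β i)] : CompleteSpace (PiLp p β) :=
  (PiLp.uniformEquiv p β).completeSpace_iff.2 inferInstance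

/-- The uniformity on `WithLp p (α × β)` is the product uniformity, hence completeness
transfers. -/
instance withLpProdCompleteSpace {p : ℝ≥0∞} {α : Type u} {β : Type w} [UniformSpace α]
    [UniformSpace β] [CompleteSpace α] [CompleteSpace β] : CompleteSpace (WithLp p (α × β)) :=
  (WithLp.uniformEquivProd p α β).completeSpace_iff.2 inferInstance

section Poly

variable {W : Type w} [NormedAddCommGroup W] [InnerProductSpace ℂ W] [CompleteSpace W]

/-- A bounded operator is positive iff `⟪v, a v⟫ ≥ 0` for all vectors `v`. -/
def IsPosOp (a : W →L[ℂ] W) : Prop := ∀ v : W, 0 ≤ ⟪v, a v⟫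

/-- `S ⊆ B(W)` is a von Neumann algebra: a unital ⋆-subalgebra equal to its double
commutant. -/
def IsVNA (S : Set (W →L[ℂ] W)) : Prop :=
  (1 : W →L[ℂ] W) ∈ S ∧
    (∀ a ∈ S, ∀ b ∈ S, a + b ∈ S) ∧
    (∀ c : ℂ, ∀ a ∈ S, c • a ∈ S) ∧
    (∀ a ∈ S, ∀ b ∈ S, a * b ∈ S) ∧
    (∀ a ∈ S, star a ∈ S) ∧
    Set.centralizer (Set.centralizer S) = S

/-- A positive normal functional on a von Neumann algebra `S ⊆ B(W)`, described by its
values on operators, together with a witness (an `ℓ²`-family of implementing vectors) of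
positivity and σ-weak continuity (normality).  This is the standard characterization of
positive normal functionals on a von Neumann algebra. -/
structure NormalPF (S : Set (W →L[ℂ] W)) where
  val : (W →L[ℂ] W) → ℂ
  normal : ∃ ξ : ℕ → W, Summable (fun m => ‖ξ m‖ ^ 2) ∧
    ∀ a ∈ S, val a = ∑' m, ⟪ξ m, a (ξ m)⟫

namespace NormalPF

variable {S : Set (W →L[ℂ] W)}

/-- Subnormalized states: `ω(1) ≤ 1`. -/
def IsSubnormalized (ω : NormalPF S) : Prop := (ω.val 1).re ≤ 1

/-- Normalized states: `ω(1) = 1`. -/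
def IsState (ω : NormalPF S) : Prop := ω.val 1 = 1

end NormalPF

/-- The norm of a (difference of) functional(s) on `S`, i.e. the norm in the predual:
`‖φ‖ = sup { |φ(x)| : x ∈ S, ‖x‖ ≤ 1 }`. -/
def funcNorm (S : Set (W →L[ℂ] W)) (φ : (W →L[ℂ] W) → ℂ) : ℝ :=
  sSup { r : ℝ | ∃ a ∈ S, ‖a‖ ≤ 1 ∧ r = ‖φ a‖ }

/-- The operator `(x_{ij})` of an `ι × ι` matrix of operators on `W`, acting on the
Hilbert space `ℓ²(ι) ⊗ W = ⊕_{i ∈ ι} W`; this realizes `M_ι(B(W))`. -/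
def matOp {ι : Type} [Fintype ι] (x : Matrix ι ι (W →L[ℂ] W)) :
    PiLp 2 (fun _ : ι => W) →L[ℂ] PiLp 2 (fun _ : ι => W) :=
  ((PiLp.continuousLinearEquiv 2 ℂ (fun _ : ι => W)).symm.toContinuousLinearMap) ∘L
    (ContinuousLinearMap.pi fun i => ∑ j, (x i j) ∘L (ContinuousLinearMap.proj j)) ∘L
    ((PiLp.continuousLinearEquiv 2 ℂ (fun _ : ι => W)).toContinuousLinearMap)

/-- The operator `E_{ij} ⊗ b` (matrix unit tensor an operator). -/
def matUnit {ι : Type} [Fintype ι] [DecidableEq ι] (i j : ι) (b : W →L[ℂ] W) :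
    PiLp 2 (fun _ : ι => W) →L[ℂ] PiLp 2 (fun _ : ι => W) :=
  matOp (Matrix.single i j b)

/-- The bipartite von Neumann algebra `M_A ⊗ M_B = M_ι(M)`, where the system `A` is the
finite-dimensional matrix algebra `M_ι` and `B` is described by the von Neumann algebra
`M ⊆ B(W)`; its elements are the matrices with entries in `M`. -/
def matrixAlgebra (ι : Type) [Fintype ι] (M : Set (W →L[ℂ] W)) :
    Set (PiLp 2 (fun _ : ι => W) →L[ℂ] PiLp 2 (fun _ : ι => W)) :=
  { T | ∃ x : Matrix ι ι (W →L[ℂ] W), (∀ i j, x i j ∈ M) ∧ T = matOp x }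

/-- A state on `M_ι(M)` is a classical-quantum (cq) state (i.e. comes from a state on
`ℓ^∞(ι) ⊗ M`) if it is supported on the diagonal. -/
def IsCQ {ι : Type} [Fintype ι] [DecidableEq ι] {M : Set (W →L[ℂ] W)}
    (ω : NormalPF (matrixAlgebra ι M)) : Prop :=
  ∀ x : Matrix ι ι (W →L[ℂ] W), (∀ i j, x i j ∈ M) →
    ω.val (matOp x) = ∑ i, ω.val (matUnit i i (x i i))

/-- The conditional min-entropy `H_min(A|B)_φ = sup_{σ ∈ S(M_B)} (- D_max(φ ‖ τ_A ⊗ σ))`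
of a functional `φ` on the bipartite algebra `M_ι(M)`.  Here
`- D_max(φ ‖ τ_A ⊗ σ) = sup { r : φ ≤ 2^{-r} · (τ_A ⊗ σ) }`, where `τ_A` is the
(unnormalized) trace on `M_ι` and the ordering of functionals is tested on the positive
elements of the algebra. -/
def Hmin (ι : Type) [Fintype ι] (M : Set (W →L[ℂ] W))
    (φ : (PiLp 2 (fun _ : ι => W) →L[ℂ] PiLp 2 (fun _ : ι => W)) → ℂ) : ℝ :=
  sSup { r : ℝ | ∃ σ : NormalPF M, σ.IsState ∧
    ∀ x : Matrix ι ι (W →L[ℂ] W), (∀ i j, x i j ∈ M) → IsPosOp (matOp x) →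
      (φ (matOp x)).re ≤ (2 : ℝ) ^ (-r) * ∑ i, (σ.val (x i i)).re }

/-- The system `A ∨ C` generated by a family of matrix units `e : ι × ι → B(L)` (an
`ι`-dimensional system `A`) and a commuting von Neumann algebra `C ⊆ B(L)`. -/
def pairAlgebra {ι : Type} [Fintype ι] (e : ι → ι → (W →L[ℂ] W)) (C : Set (W →L[ℂ] W)) :
    Set (W →L[ℂ] W) :=
  { T | ∃ c : Matrix ι ι (W →L[ℂ] W), (∀ i j, c i j ∈ C) ∧ T = ∑ i, ∑ j, e i j * c i j }

/-- The conditional min-entropy `H_min(A|C)_φ` where the `ι`-dimensional system `A` is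
given by matrix units `e` and the system `C` by a commuting von Neumann algebra
`C ⊆ B(L)`: `H_min(A|C)_φ = sup_{σ ∈ S(C)} (- D_max(φ ‖ τ_A ⊗ σ))`. -/
def HminPair {ι : Type} [Fintype ι] (e : ι → ι → (W →L[ℂ] W)) (C : Set (W →L[ℂ] W))
    (φ : (W →L[ℂ] W) → ℂ) : ℝ :=
  sSup { r : ℝ | ∃ σ : NormalPF C, σ.IsState ∧
    ∀ c : Matrix ι ι (W →L[ℂ] W), (∀ i j, c i j ∈ C) →
      IsPosOp (∑ i, ∑ j, e i j * c i j) →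
      (φ (∑ i, ∑ j, e i j * c i j)).re ≤ (2 : ℝ) ^ (-r) * ∑ i, (σ.val (c i i)).re }

/-- The (subnormalized) state implemented by the vector `ξ`, i.e. `a ↦ ⟪ξ, a ξ⟫`. -/
def vecState (S : Set (W →L[ℂ] W)) (ξ : W) : NormalPF S where
  val a := ⟪ξ, a ξ⟫
  normal := by
    refine ⟨fun m => if m = 0 then ξ else 0, ?_, ?_⟩
    · refine summable_of_ne_finset_zero (s := {0}) ?_
      intro m hm
      have hm' : m ≠ 0 := by simpa using hm
      simp [hm']
    · intro a _
      rw [tsum_eq_single 0 ?_]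
      · simp
      · intro m hm
        simp [hm]

end Poly

section RepBased

variable {K : Type u} [NormedAddCommGroup K] [InnerProductSpace ℂ K] [CompleteSpace K]

/-- A (normal, unital) representation of the von Neumann algebra `S ⊆ B(K)` on another
Hilbert space `L'`.  Normality is encoded by requiring that all vector functionals pull
back to normal functionals. -/
structure Rep (S : Set (K →L[ℂ] K)) (L' : Type u) [NormedAddCommGroup L']
    [InnerProductSpace ℂ L'] [CompleteSpace L'] where
  app : (K →L[ℂ] K) → (L' →L[ℂ] L')
  map_one : app 1 = 1
  map_add : ∀ a ∈ S, ∀ b ∈ S, app (a + b) = app a + app b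
  map_smul : ∀ c : ℂ, ∀ a ∈ S, app (c • a) = c • app a
  map_mul : ∀ a ∈ S, ∀ b ∈ S, app (a * b) = app a * app b
  map_star : ∀ a ∈ S, app (star a) = star (app a)
  normal : ∀ η : L', ∃ ξ : ℕ → K, Summable (fun m => ‖ξ m‖ ^ 2) ∧
    ∀ a ∈ S, ⟪η, app a η⟫ = ∑' m, ⟪ξ m, a (ξ m)⟫

/-- `(π, L', ξ)` is a purification of `ω ∈ S≤(S)`: `ω(a) = ⟪ξ, π(a) ξ⟫` for all `a ∈ S`. -/
def IsPurification {S : Set (K →L[ℂ] K)} {L' : Type u} [NormedAddCommGroup L']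
    [InnerProductSpace ℂ L'] [CompleteSpace L'] (ω : NormalPF S) (π : Rep S L') (ξ : L') :
    Prop :=
  ∀ a ∈ S, ω.val a = ⟪ξ, π.app a ξ⟫

/-- The fidelity `F(ω, σ) = sup_π |⟪ξ_ω^π, ξ_σ^π⟫|²`, the supremum running over all
representations of `S` admitting simultaneous purifying vectors for `ω` and `σ`. -/
def fidelity (S : Set (K →L[ℂ] K)) (ω σ : NormalPF S) : ℝ :=
  sSup { r : ℝ | ∃ (L' : Type u) (_ : NormedAddCommGroup L') (_ : InnerProductSpace ℂ L')
    (_ : CompleteSpace L') (π : Rep S L') (ξω ξσ : L'),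
    IsPurification ω π ξω ∧ IsPurification σ π ξσ ∧ r = ‖⟪ξω, ξσ⟫‖ ^ 2 }

/-- The generalized fidelity of two subnormalized states, given by the closed formula
`𝓕(ω,σ)^{1/2} = F(ω,σ)^{1/2} + (1-ω(1))^{1/2}(1-σ(1))^{1/2}`. -/
def gFid (S : Set (K →L[ℂ] K)) (ω σ : NormalPF S) : ℝ :=
  (Real.sqrt (fidelity S ω σ) +
    Real.sqrt (1 - (ω.val 1).re) * Real.sqrt (1 - (σ.val 1).re)) ^ 2

/-- The purified distance `𝓟(ω,σ) = sqrt(1 - 𝓕(ω,σ))`. -/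
def pDist (S : Set (K →L[ℂ] K)) (ω σ : NormalPF S) : ℝ :=
  Real.sqrt (1 - gFid S ω σ)

variable {H : Type u} [NormedAddCommGroup H] [InnerProductSpace ℂ H] [CompleteSpace H]

/-- The conditional max-entropy `H_max(A|B)_ω = - H_min(A'|C)_ω`, computed in an
arbitrary purification `(π, L', ξ)` of `ω`, where the relevant system `A'` is given by the
matrix units `π(E_{ij} ⊗ 1)` and the complementary system is `C = π(M_{AB})'` (this value
is independent of the chosen purification). -/
def Hmax (ι : Type) [Fintype ι] [DecidableEq ι] (M : Set (H →L[ℂ] H))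
    (ω : NormalPF (matrixAlgebra ι M)) : ℝ :=
  sSup { h : ℝ | ∃ (L' : Type u) (_ : NormedAddCommGroup L') (_ : InnerProductSpace ℂ L')
    (_ : CompleteSpace L') (π : Rep (matrixAlgebra ι M) L') (ξ : L'),
    IsPurification ω π ξ ∧
    h = - HminPair (fun i j => π.app (matUnit i j 1))
      (Set.centralizer (π.app '' (matrixAlgebra ι M))) (fun T => ⟪ξ, T ξ⟫) }

/-- The ε-smooth conditional min-entropy: supremum of `H_min(A|B)` over the
purified-distance ε-ball of subnormalized states. -/
def sHmin (ι : Type) [Fintype ι] (M : Set (H →L[ℂ] H))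
    (ω : NormalPF (matrixAlgebra ι M)) (ε : ℝ) : ℝ :=
  sSup { h : ℝ | ∃ ω' : NormalPF (matrixAlgebra ι M), ω'.IsSubnormalized ∧
    pDist (matrixAlgebra ι M) ω ω' ≤ ε ∧ h = Hmin ι M ω'.val }

/-- The ε-smooth conditional max-entropy: infimum of `H_max(A|B)` over the
purified-distance ε-ball of subnormalized states. -/
def sHmax (ι : Type) [Fintype ι] [DecidableEq ι] (M : Set (H →L[ℂ] H))
    (ω : NormalPF (matrixAlgebra ι M)) (ε : ℝ) : ℝ :=
  sInf { h : ℝ | ∃ ω' : NormalPF (matrixAlgebra ι M), ω'.IsSubnormalized ∧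
    pDist (matrixAlgebra ι M) ω ω' ≤ ε ∧ h = Hmax ι M ω' }

/-- The ε-smooth conditional min-entropy `H_min^ε(A|C)` in the "pair" picture: the system
`A` is given by matrix units `e` on `L'` and `C` is a commuting von Neumann algebra. -/
def sHminPair {L' : Type u} [NormedAddCommGroup L'] [InnerProductSpace ℂ L']
    [CompleteSpace L'] {ι : Type} [Fintype ι] (e : ι → ι → (L' →L[ℂ] L'))
    (C : Set (L' →L[ℂ] L')) (ω : NormalPF (pairAlgebra e C)) (ε : ℝ) : ℝ :=
  sSup { h : ℝ | ∃ ω' : NormalPF (pairAlgebra e C), ω'.IsSubnormalized ∧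
    pDist (pairAlgebra e C) ω ω' ≤ ε ∧ h = HminPair e C ω'.val }

/-- A quantum channel from the system described by `S ⊆ B(K')` to the system described by
`T ⊆ B(L')`, i.e. a normal, completely positive, unital linear map `𝓔 : T → S` (Heisenberg
picture). -/
structure Channel {K' : Type u} [NormedAddCommGroup K'] [InnerProductSpace ℂ K']
    [CompleteSpace K'] {L' : Type w} [NormedAddCommGroup L'] [InnerProductSpace ℂ L']
    [CompleteSpace L'] (S : Set (K' →L[ℂ] K')) (T : Set (L' →L[ℂ] L')) where
  app : (L' →L[ℂ] L') → (K' →L[ℂ] K')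
  mem : ∀ a ∈ T, app a ∈ S
  map_one : app 1 = 1
  map_add : ∀ a ∈ T, ∀ b ∈ T, app (a + b) = app a + app b
  map_smul : ∀ c : ℂ, ∀ a ∈ T, app (c • a) = c • app a
  cp : ∀ (n : ℕ) (c : Matrix (Fin n) (Fin n) (L' →L[ℂ] L')), (∀ i j, c i j ∈ T) →
    IsPosOp (matOp c) → IsPosOp (matOp (fun i j => app (c i j)))
  normal : ∀ ω : NormalPF S, ∃ η : ℕ → L', Summable (fun m => ‖η m‖ ^ 2) ∧
    ∀ a ∈ T, ω.val (app a) = ∑' m, ⟪η m, a (η m)⟫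

/-- The predual (Schrödinger picture) action of a quantum channel on normal states. -/
def Channel.predual {K' : Type u} [NormedAddCommGroup K'] [InnerProductSpace ℂ K']
    [CompleteSpace K'] {L' : Type w} [NormedAddCommGroup L'] [InnerProductSpace ℂ L']
    [CompleteSpace L'] {S : Set (K' →L[ℂ] K')} {T : Set (L' →L[ℂ] L')}
    (E : Channel S T) (ω : NormalPF S) : NormalPF T :=
  ⟨fun a => ω.val (E.app a), E.normal ω⟩

end RepBased

set_option linter.unusedSectionVars false

section Helpers

variable {W : Type w} [NormedAddCommGroup W] [InnerProductSpace ℂ W] [CompleteSpace W]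

lemma matOp_apply {ι : Type} [Fintype ι] (x : Matrix ι ι (W →L[ℂ] W))
    (v : PiLp 2 (fun _ : ι => W)) (i : ι) : matOp x v i = ∑ j, x i j (v j) := by
  simp [matOp, ContinuousLinearMap.pi_apply, ContinuousLinearMap.sum_apply,
    ContinuousLinearMap.proj_apply]

lemma inner_matOp {ι : Type} [Fintype ι] (x : Matrix ι ι (W →L[ℂ] W))
    (v : PiLp 2 (fun _ : ι => W)) :
    ⟪v, matOp x v⟫ = ∑ i, ∑ j, ⟪v i, x i j (v j)⟫ := by
  rw [PiLp.inner_apply]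
  refine Finset.sum_congr rfl fun i _ => ?_
  rw [matOp_apply]
  exact inner_sum _ _ _

/-- Diagonal entries of a positive operator matrix are positive. -/
lemma diag_pos {ι : Type} [Fintype ι] [DecidableEq ι] {x : Matrix ι ι (W →L[ℂ] W)}
    (hx : IsPosOp (matOp x)) (i : ι) : IsPosOp (x i i) := by
  intro w
  have h := hx ((WithLp.equiv 2 (∀ _ : ι, W)).symm (Pi.single i w))
  rw [inner_matOp] at h
  simp only [WithLp.equiv_symm_apply, PiLp.toLp_apply, Pi.single_apply] at h
  rw [Finset.sum_eq_single i (fun a _ ha => by simp [ha]) (by simp)] at h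
  rw [Finset.sum_eq_single i (fun b _ hb => by simp [hb]) (by simp)] at h
  simpa using h

/-- `⟪v, matUnit i i b v⟫ = ⟪v i, b (v i)⟫`. -/
lemma inner_matUnit {ι : Type} [Fintype ι] [DecidableEq ι] (i : ι) (b : W →L[ℂ] W)
    (v : PiLp 2 (fun _ : ι => W)) : ⟪v, matUnit i i b v⟫ = ⟪v i, b (v i)⟫ := by
  rw [matUnit, inner_matOp]
  simp [Matrix.single, apply_ite, ite_apply, ite_and,
    Finset.sum_ite_eq', Finset.sum_ite_eq]

lemma matUnit_pos {ι : Type} [Fintype ι] [DecidableEq ι] (i : ι) {b : W →L[ℂ] W}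
    (hb : IsPosOp b) : IsPosOp (matUnit i i b) := by
  intro v
  rw [inner_matUnit]
  exact hb (v i)

lemma matUnit_mem {ι : Type} [Fintype ι] [DecidableEq ι] {M : Set (W →L[ℂ] W)}
    (hM : IsVNA M) (i j : ι) {b : W →L[ℂ] W} (hb : b ∈ M) :
    matUnit i j b ∈ matrixAlgebra ι M := by
  refine ⟨Matrix.single i j b, fun i' j' => ?_, rfl⟩
  by_cases h : i = i' ∧ j = j'
  · obtain ⟨rfl, rfl⟩ := h; simpa [Matrix.single] using hb
  · have h0 : (0 : W →L[ℂ] W) ∈ M := by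
      simpa using hM.2.2.1 0 1 hM.1
    simp only [Matrix.single, Matrix.of_apply]
    split
    · next hh => exact absurd hh h
    · exact h0

/-- Value of a normal functional on a positive element of the algebra has nonneg real
part (in fact the value is nonneg). -/
lemma val_nonneg {S : Set (W →L[ℂ] W)} (ω : NormalPF S) {a : W →L[ℂ] W} (ha : a ∈ S)
    (hpos : IsPosOp a) : 0 ≤ (ω.val a).re := by
  obtain ⟨ξ, hsum, hval⟩ := ω.normal
  rw [hval a ha]
  by_cases hs : Summable fun m => ⟪ξ m, a (ξ m)⟫
  · rw [Complex.re_tsum hs]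
    refine tsum_nonneg fun m => ?_
    exact (Complex.le_def.mp (hpos (ξ m))).1
  · rw [tsum_eq_zero_of_not_summable hs]; simp

/-- `matOp` of the identity matrix is the identity. -/
lemma matOp_one {ι : Type} [Fintype ι] [DecidableEq ι] :
    matOp (1 : Matrix ι ι (W →L[ℂ] W)) = 1 := by
  ext v i
  rw [ContinuousLinearMap.one_apply, matOp_apply]
  simp [Matrix.one_apply, apply_ite, ite_apply, Finset.sum_ite_eq']

end Helpers
/-- Converse for privacy amplification: if applying `f : X → K` to the
classical part of the cq-state `ω_XE` yields a perfectly uniform key decoupled from `E`,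
i.e. `ω_{f(X)E} = (1/|K|) e_K ⊗ σ_E` for some state `σ_E`, then
`log₂ |K| ≤ H_min(X|E)_ω`. -/
theorem perfect_key_length_bounded_by_Hmin
    {H : Type u} [NormedAddCommGroup H] [InnerProductSpace ℂ H] [CompleteSpace H]
    (X Kt : Type) [Fintype X] [DecidableEq X] [Fintype Kt] [DecidableEq Kt]
    (hcard : Fintype.card Kt ≤ Fintype.card X)
    (M : Set (H →L[ℂ] H)) (hM : IsVNA M)
    (f : X → Kt)
    (ω : NormalPF (matrixAlgebra X M)) (hcq : IsCQ ω) (hst : ω.IsState)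
    (σ : NormalPF M) (hσ : σ.IsState)
    (hkey : ∀ k : Kt, ∀ b ∈ M,
      (∑ x ∈ Finset.univ.filter fun x => f x = k, ω.val (matUnit x x b)) =
        (1 / (Fintype.card Kt : ℂ)) * σ.val b) :
    Real.logb 2 (Fintype.card Kt) ≤ Hmin X M ω.val := by
  by_cases hXe : Nonempty X
  · -- main case
    have hKe : Nonempty Kt := ⟨f hXe.some⟩
    have hKpos : (0 : ℝ) < Fintype.card Kt := by
      exact_mod_cast Fintype.card_pos
    have hXpos : (0 : ℝ) < Fintype.card X := by
      exact_mod_cast Fintype.card_pos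
    set S : Set ℝ := { r : ℝ | ∃ σ' : NormalPF M, σ'.IsState ∧
      ∀ x : Matrix X X (H →L[ℂ] H), (∀ i j, x i j ∈ M) → IsPosOp (matOp x) →
        (ω.val (matOp x)).re ≤ (2 : ℝ) ^ (-r) * ∑ i, (σ'.val (x i i)).re } with hS
    have hmem : Real.logb 2 (Fintype.card Kt) ∈ S := by
      refine ⟨σ, hσ, fun x hx hpos => ?_⟩
      have hpow : (2 : ℝ) ^ (-Real.logb 2 (Fintype.card Kt)) =
          ((Fintype.card Kt : ℝ))⁻¹ := by
        rw [Real.rpow_neg (by norm_num), Real.rpow_logb (by norm_num) (by norm_num) hKpos]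
      rw [hpow]
      rw [hcq x hx, Complex.re_sum]
      have hterm : ∀ i : X, (ω.val (matUnit i i (x i i))).re ≤
          ((Fintype.card Kt : ℝ))⁻¹ * (σ.val (x i i)).re := by
        intro i
        have hb : x i i ∈ M := hx i i
        have hbpos : IsPosOp (x i i) := diag_pos hpos i
        have hk := hkey (f i) (x i i) hb
        have hre : ∑ x' ∈ Finset.univ.filter fun x' => f x' = f i,
            (ω.val (matUnit x' x' (x i i))).re =
            ((Fintype.card Kt : ℝ))⁻¹ * (σ.val (x i i)).re := by
          rw [← Complex.re_sum, hk,
            show (1 / (Fintype.card Kt : ℂ)) = ((((Fintype.card Kt : ℝ))⁻¹ : ℝ) : ℂ) by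
              push_cast; ring]
          simp [Complex.mul_re]
        rw [← hre]
        refine Finset.single_le_sum (f := fun x' => (ω.val (matUnit x' x' (x i i))).re)
          (fun x' _ => ?_) (by simp)
        exact val_nonneg ω (matUnit_mem hM x' x' hb) (matUnit_pos x' hbpos)
      calc ∑ i, (ω.val (matUnit i i (x i i))).re
          ≤ ∑ i, ((Fintype.card Kt : ℝ))⁻¹ * (σ.val (x i i)).re :=
            Finset.sum_le_sum fun i _ => hterm i
        _ = ((Fintype.card Kt : ℝ))⁻¹ * ∑ i, (σ.val (x i i)).re := by
            rw [Finset.mul_sum]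
    have hbdd : BddAbove S := by
      refine ⟨Real.logb 2 (Fintype.card X), fun r hr => ?_⟩
      obtain ⟨σ', hσ', hineq⟩ := hr
      have h0 : (0 : H →L[ℂ] H) ∈ M := by simpa using hM.2.2.1 0 1 hM.1
      have hent : ∀ i j : X, (1 : Matrix X X (H →L[ℂ] H)) i j ∈ M := by
        intro i j
        by_cases hij : i = j
        · subst hij; simpa [Matrix.one_apply] using hM.1
        · simpa [Matrix.one_apply, hij] using h0
      have hpos1 : IsPosOp (matOp (1 : Matrix X X (H →L[ℂ] H))) := by
        rw [matOp_one]
        intro v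
        rw [ContinuousLinearMap.one_apply, inner_self_eq_norm_sq_to_K]
        positivity
      have := hineq 1 hent hpos1
      rw [matOp_one, hst] at this
      have hd : ∀ i : X, (1 : Matrix X X (H →L[ℂ] H)) i i = 1 := by
        simp [Matrix.one_apply]
      have hσ'1 : σ'.val 1 = 1 := hσ'
      simp only [hd, hσ'1] at this
      simp only [Complex.one_re, Finset.sum_const, Finset.card_univ, nsmul_eq_mul,
        mul_one] at this
      -- this : 1 ≤ 2 ^ (-r) * card X
      have h1 : ((Fintype.card X : ℝ))⁻¹ ≤ (2 : ℝ) ^ (-r) := by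
        rw [inv_le_iff_one_le_mul₀ hXpos]
        linarith
      have h2 : (2 : ℝ) ^ (-Real.logb 2 (Fintype.card X)) ≤ (2 : ℝ) ^ (-r) := by
        rwa [Real.rpow_neg (by norm_num : (0:ℝ) ≤ 2),
          Real.rpow_logb (by norm_num) (by norm_num) hXpos]
      have := (Real.rpow_le_rpow_left_iff (by norm_num : (1:ℝ) < 2)).mp h2
      linarith
    exact le_csSup hbdd hmem
  · -- X empty
    have hX : IsEmpty X := not_nonempty_iff.mp hXe
    have hK0 : Fintype.card Kt = 0 := by
      have hX0 : Fintype.card X = 0 := Fintype.card_eq_zero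
      omega
    rw [hK0, Hmin]
    have hempty : { r : ℝ | ∃ σ' : NormalPF M, σ'.IsState ∧
        ∀ x : Matrix X X (H →L[ℂ] H), (∀ i j, x i j ∈ M) → IsPosOp (matOp x) →
          (ω.val (matOp x)).re ≤ (2 : ℝ) ^ (-r) * ∑ i, (σ'.val (x i i)).re } = ∅ := by
      ext r
      simp only [Set.mem_setOf_eq, Set.mem_empty_iff_false, iff_false, not_exists]
      rintro σ' ⟨hσ', hineq⟩
      have hent : ∀ i j : X, (1 : Matrix X X (H →L[ℂ] H)) i j ∈ M :=
        fun i _ => isEmptyElim i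
      have hpos1 : IsPosOp (matOp (1 : Matrix X X (H →L[ℂ] H))) := by
        rw [matOp_one]
        intro v
        rw [ContinuousLinearMap.one_apply, inner_self_eq_norm_sq_to_K]
        positivity
      have h := hineq 1 hent hpos1
      have hst1 : ω.val 1 = 1 := hst
      rw [matOp_one, hst1] at h
      simp only [Complex.one_re, Finset.univ_eq_empty, Finset.sum_empty, mul_zero] at h
      norm_num at h
    rw [hempty, Real.sSup_empty]
    simp

end VNPaper
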